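/- Idle region of the suboptimal policy (Theorem 2, Property 1): let V̂_{n,m} : {0,…,N_{n,m}} → ℝ be non-decreasing for every (n,m) ∈ I and set V̂(Q) = Σ_{(n,m)∈I} V̂_{n,m}(Q_{n,m}). Let 𝟎 denote the all-idle action (0,…,0) ∈ 𝒰. If Q ∈ 𝒬 satisfies Q_{n,m} ≤ φ̂_𝟎⁺(Q_{−n,−m}) for every (n,m) ∈ I, then Δ̂_{𝟎,v}(Q) ≤ 0 for every v ∈ 𝒰; in particular the idle action 𝟎 attains min_{u∈𝒰} Ĵ(Q,u), i.e., the suboptimal policy μ̂* keeps all BSs idle at Q. -/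

import Mathlib

open Finset

namespace HetNet

/-- The queue index set `I = {(n,m) : 0 ≤ n ≤ N, m ∈ M_n}`. -/
abbrev Idx {N M : ℕ} (cache : Fin (N + 1) → Finset (Fin M)) : Type :=
  {p : Fin (N + 1) × Fin M // p.2 ∈ cache p.1}

/-- The feasible action space `𝒰`: each BS schedules a cached content or idles (`none`),
and the MBS (BS `0`) and the SBSs do not operate concurrently. -/
def Feasible {N M : ℕ} (cache : Fin (N + 1) → Finset (Fin M))
    (u : Fin (N + 1) → Option (Fin M)) : Prop :=
  (∀ n m, u n = some m → m ∈ cache n) ∧ (u 0 ≠ none → ∀ n, n ≠ 0 → u n = none)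

instance {N M : ℕ} (cache : Fin (N + 1) → Finset (Fin M)) :
    DecidablePred (Feasible cache) := by
  intro u; unfold Feasible; infer_instance

instance {N M : ℕ} (cache : Fin (N + 1) → Finset (Fin M)) :
    Nonempty {u : Fin (N + 1) → Option (Fin M) // Feasible cache u} :=
  ⟨⟨fun _ => none, fun _ _ h => (by cases h), fun h => absurd rfl h⟩⟩

/-- Queue `(n,m)` is served by action `u`. -/
def Served {N M : ℕ} (u : Fin (N + 1) → Option (Fin M)) (n : Fin (N + 1)) (m : Fin M) : Prop :=
  (n = 0 ∧ u 0 = some m) ∨ (n ≠ 0 ∧ (u 0 = some m ∨ u n = some m))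

instance {N M : ℕ} (u : Fin (N + 1) → Option (Fin M)) (n : Fin (N + 1)) (m : Fin M) :
    Decidable (Served u n m) := by unfold Served; infer_instance

/-- The queue transition map `T(Q,u,A)`. -/
def T {N M : ℕ} {cache : Fin (N + 1) → Finset (Fin M)} (bound : Idx cache → ℕ)
    (Q : Idx cache → ℕ) (u : Fin (N + 1) → Option (Fin M)) (A : Idx cache → ℕ) :
    Idx cache → ℕ := fun i =>
  if Served u i.val.1 i.val.2 then min (A i) (bound i) else min (Q i + A i) (bound i)

/-- The network power cost `p(u) = Σ_n p(n, u_n)` (with `p(n,0) = 0` for an idling BS). -/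
def pcost {N M : ℕ} (p : Fin (N + 1) → Fin M → ℝ) (u : Fin (N + 1) → Option (Fin M)) : ℝ :=
  ∑ n, (u n).elim 0 (p n)

/-- The sum request queue length `d(Q)`. -/
def dcost {N M : ℕ} {cache : Fin (N + 1) → Finset (Fin M)} (Q : Idx cache → ℕ) : ℝ :=
  ∑ i, (Q i : ℝ)

/-- The per-stage cost `g(Q,u) = d(Q) + w·p(u)`. -/
def gcost {N M : ℕ} (p : Fin (N + 1) → Fin M → ℝ) (w : ℝ)
    {cache : Fin (N + 1) → Finset (Fin M)}
    (Q : Idx cache → ℕ) (u : Fin (N + 1) → Option (Fin M)) : ℝ :=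
  dcost Q + w * pcost p u

/-- The state-action cost `J_V(Q,u) = g(Q,u) + Σ_{A∈𝒜} P(A)·V(T(Q,u,A))`. -/
def Jcost {N M : ℕ} (p : Fin (N + 1) → Fin M → ℝ) (w : ℝ)
    {cache : Fin (N + 1) → Finset (Fin M)} (bound : Idx cache → ℕ)
    {ι : Type} [Fintype ι] (P : ι → ℝ) (A : ι → Idx cache → ℕ)
    (V : (Idx cache → ℕ) → ℝ) (Q : Idx cache → ℕ)
    (u : Fin (N + 1) → Option (Fin M)) : ℝ :=
  gcost p w Q u + ∑ a, P a * V (T bound Q u (A a))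

open scoped Classical in
/-- `Φ_u(Q_{−n,−m})`: the set of queue lengths `q ∈ {0,…,N_{n,m}}` at coordinate `i = (n,m)`
such that action `u` dominates every other feasible action at the state obtained from `Q`
by replacing its `(n,m)`-coordinate with `q`.  Its `Finset.max` (valued in `WithBot ℕ`,
`⊥` = −∞) is `φ_u⁺(Q_{−n,−m})`, and its `Finset.min` (valued in `WithTop ℕ`, `⊤` = +∞)
is `φ_u⁻(Q_{−n,−m})`. -/
noncomputable def Phi {N M : ℕ} (p : Fin (N + 1) → Fin M → ℝ) (w : ℝ)
    {cache : Fin (N + 1) → Finset (Fin M)} (bound : Idx cache → ℕ)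
    {ι : Type} [Fintype ι] (P : ι → ℝ) (A : ι → Idx cache → ℕ)
    (V : (Idx cache → ℕ) → ℝ) (u : Fin (N + 1) → Option (Fin M))
    (i : Idx cache) (Q : Idx cache → ℕ) : Finset ℕ :=
  (Finset.range (bound i + 1)).filter fun q =>
    ∀ v, Feasible cache v → v ≠ u →
      Jcost p w bound P A V (Function.update Q i q) u -
        Jcost p w bound P A V (Function.update Q i q) v ≤ 0

lemma not_served_idle {N M : ℕ} (n : Fin (N + 1)) (m : Fin M) :
    ¬ Served (fun _ => none) n m := by
  simp [Served]

/-- Monotonicity in one coordinate of the advantage of idling over any action `v`. -/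
lemma Jdiff_mono {N M : ℕ} {cache : Fin (N + 1) → Finset (Fin M)}
    (bound : Idx cache → ℕ) (p : Fin (N + 1) → Fin M → ℝ) (w : ℝ)
    {ι : Type} [Fintype ι] (P : ι → ℝ) (A : ι → Idx cache → ℕ)
    (hP : ∀ a, 0 ≤ P a)
    (Vv : (i : Idx cache) → ℕ → ℝ)
    (hVv : ∀ i : Idx cache, ∀ q q' : ℕ, q ≤ q' → q' ≤ bound i → Vv i q ≤ Vv i q')
    (v : Fin (N + 1) → Option (Fin M)) (i : Idx cache) (Q : Idx cache → ℕ)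
    (q q' : ℕ) (hq : q ≤ q') (hq' : q' ≤ bound i) :
    Jcost p w bound P A (fun Q' => ∑ j, Vv j (Q' j)) (Function.update Q i q)
        (fun _ => none) -
      Jcost p w bound P A (fun Q' => ∑ j, Vv j (Q' j)) (Function.update Q i q) v ≤
    Jcost p w bound P A (fun Q' => ∑ j, Vv j (Q' j)) (Function.update Q i q')
        (fun _ => none) -
      Jcost p w bound P A (fun Q' => ∑ j, Vv j (Q' j)) (Function.update Q i q') v := by
  classical
  suffices h :
      ∑ a, P a * ((∑ j, Vv j (T bound (Function.update Q i q) (fun _ => none) (A a) j)) -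
          ∑ j, Vv j (T bound (Function.update Q i q) v (A a) j)) ≤
      ∑ a, P a * ((∑ j, Vv j (T bound (Function.update Q i q') (fun _ => none) (A a) j)) -
          ∑ j, Vv j (T bound (Function.update Q i q') v (A a) j)) by
    simp only [Jcost, gcost, mul_sub, Finset.sum_sub_distrib] at h ⊢
    linarith
  refine Finset.sum_le_sum fun a _ => mul_le_mul_of_nonneg_left ?_ (hP a)
  rw [← Finset.sum_sub_distrib, ← Finset.sum_sub_distrib]
  refine Finset.sum_le_sum fun j _ => ?_
  by_cases hj : j = i
  · subst hj
    simp only [T, if_neg (not_served_idle _ _), Function.update_self]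
    by_cases hs : Served v j.val.1 j.val.2
    · simp only [if_pos hs]
      refine sub_le_sub_right (hVv j _ _ ?_ (min_le_right _ _)) _
      exact min_le_min (by omega) le_rfl
    · simp only [if_neg hs, Function.update_self, sub_self, le_refl]
  · have hT : ∀ (u : Fin (N + 1) → Option (Fin M)) (qq : ℕ),
        T bound (Function.update Q i qq) u (A a) j = T bound Q u (A a) j := by
      intro u qq
      simp [T, Function.update_of_ne hj]
    rw [hT, hT, hT, hT]

/-- Theorem 2, Property 1: idle region of the suboptimal policy: with the
additive separable approximation `V̂(Q) = Σ V̂_{n,m}(Q_{n,m})` built from non-decreasing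
per-queue value functions, if `Q ∈ 𝒬` satisfies `Q_{n,m} ≤ φ̂_𝟎⁺(Q_{−n,−m})` for every
`(n,m) ∈ I`, then `Δ̂_{𝟎,v}(Q) ≤ 0` for every `v ∈ 𝒰`; in particular the idle action
attains `min_{u∈𝒰} Ĵ(Q,u)`. -/
theorem suboptimal_idle_region {N M : ℕ} (cache : Fin (N + 1) → Finset (Fin M))
    (hcache0 : ∀ m : Fin M, m ∈ cache 0)
    (bound : Idx cache → ℕ)
    (p : Fin (N + 1) → Fin M → ℝ) (hp : ∀ n m, 0 ≤ p n m)
    (w : ℝ) (hw : 0 ≤ w)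
    {ι : Type} [Fintype ι] (P : ι → ℝ) (A : ι → Idx cache → ℕ)
    (hP : ∀ a, 0 ≤ P a) (hPsum : ∑ a, P a = 1)
    (Vv : (i : Idx cache) → ℕ → ℝ)
    (hVv : ∀ i : Idx cache, ∀ q q' : ℕ, q ≤ q' → q' ≤ bound i → Vv i q ≤ Vv i q')
    (Q : Idx cache → ℕ) (hQ : ∀ i, Q i ≤ bound i)
    (hidle : ∀ i : Idx cache,
      (Q i : WithBot ℕ) ≤
        (Phi p w bound P A (fun Q' => ∑ j, Vv j (Q' j)) (fun _ => none) i Q).max) :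
    (∀ v, Feasible cache v →
        Jcost p w bound P A (fun Q' => ∑ j, Vv j (Q' j)) Q (fun _ => none) -
          Jcost p w bound P A (fun Q' => ∑ j, Vv j (Q' j)) Q v ≤ 0) ∧
      Jcost p w bound P A (fun Q' => ∑ j, Vv j (Q' j)) Q (fun _ => none) =
        ⨅ u : {u // Feasible cache u},
          Jcost p w bound P A (fun Q' => ∑ j, Vv j (Q' j)) Q u.val := by
  classical
  set V : (Idx cache → ℕ) → ℝ := fun Q' => ∑ j, Vv j (Q' j) with hV
  have hidle_feas : Feasible cache (fun _ => none) :=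
    ⟨fun _ _ h => (by cases h), fun h => absurd rfl h⟩
  have key : ∀ v, Feasible cache v →
      Jcost p w bound P A V Q (fun _ => none) - Jcost p w bound P A V Q v ≤ 0 := by
    rcases isEmpty_or_nonempty (Idx cache) with hE | hNE
    · intro v hv
      have hpc : 0 ≤ pcost p v := by
        refine Finset.sum_nonneg fun n _ => ?_
        cases hvn : v n with
        | none => simp
        | some m => simpa using hp n m
      have hpc0 : pcost p (fun _ => none) = 0 := by simp [pcost]
      simp only [Jcost, gcost, hpc0]
      have hTeq : ∀ u a, V (T bound Q u (A a)) = V Q := by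
        intro u a
        simp [hV]
      simp only [hTeq]
      nlinarith [mul_nonneg hw hpc]
    · intro v hv
      obtain ⟨i⟩ := hNE
      have h := hidle i
      set S := Phi p w bound P A V (fun _ => none) i Q with hS
      obtain ⟨b, hbmem, hQb⟩ : ∃ b ∈ S, Q i ≤ b := by
        cases hmax : S.max with
        | bot => rw [hmax] at h; simp at h
        | coe b =>
          refine ⟨b, Finset.mem_of_max hmax, ?_⟩
          rw [hmax] at h
          exact WithBot.coe_le_coe.mp h
      rw [hS, Phi, Finset.mem_filter, Finset.mem_range] at hbmem
      obtain ⟨hbr, hdom⟩ := hbmem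
      by_cases hv0 : v = fun _ => none
      · subst hv0; simp
      · have h1 := hdom v hv hv0
        have h2 := Jdiff_mono bound p w P A hP Vv hVv v i Q (Q i) b hQb
          (by omega)
        rw [Function.update_eq_self] at h2
        exact le_trans h2 h1
  refine ⟨key, le_antisymm ?_ ?_⟩
  · exact le_ciInf fun u => sub_nonpos.mp (key u.val u.property)
  · exact ciInf_le (Finite.bddBelow_range _) (⟨fun _ => none, hidle_feas⟩ : {u // Feasible cache u})

end HetNet
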